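/- Let n = 2m with m ≥ 1, and let γ : 𝔽₂^m → 𝔽₂ be a Boolean function of algebraic degree d with d ≥ 2. Then the Boolean function f on 𝔽₂^n defined by f(x₀,…,x_{n-1}) = Σ_{i=0}^{m-1} x_i·x_{i+m} + γ(x₀+x_m, x₁+x_{m+1}, …, x_{m-1}+x_{2m-1}) has algebraic degree d. -/

import Mathlib

/-- A Boolean function `f` on `𝔽₂ⁿ` has algebraic degree `d` if its (unique) algebraic normal
form — a multilinear polynomial over `𝔽₂` representing `f` — has total degree `d`. -/
def HasAlgebraicDegree {n : ℕ} (f : (ZMod n → ZMod 2) → ZMod 2) (d : ℕ) : Prop :=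
  ∃ p : MvPolynomial (ZMod n) (ZMod 2),
    (∀ s ∈ p.support, ∀ i, s i ≤ 1) ∧
    (∀ x, MvPolynomial.eval x p = f x) ∧
    p.totalDegree = d

namespace S2Aux

open MvPolynomial

variable {σ τ : Type*} [DecidableEq σ] [DecidableEq τ]

/-- The multilinear exponent vector with support `a '' T`. -/
noncomputable def msum (a : σ → τ) (T : Finset σ) : τ →₀ ℕ := ∑ j ∈ T, Finsupp.single (a j) 1

lemma msum_apply (a : σ → τ) (T : Finset σ) (x : τ) :
    msum a T x = ∑ j ∈ T, if a j = x then 1 else 0 := by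
  classical
  simp [msum, Finsupp.finset_sum_apply, Finsupp.single_apply]

lemma msum_apply_pos {a : σ → τ} {T : Finset σ} {j : σ} (hj : j ∈ T) :
    1 ≤ msum a T (a j) := by
  classical
  rw [msum_apply]
  have := Finset.single_le_sum (f := fun j' => if a j' = a j then 1 else 0)
    (fun i _ => Nat.zero_le _) hj
  simpa using this

lemma msum_apply_eq_zero {a : σ → τ} {T : Finset σ} {x : τ} (h : ∀ j ∈ T, a j ≠ x) :
    msum a T x = 0 := by
  classical
  rw [msum_apply]
  exact Finset.sum_eq_zero fun j hj => if_neg (h j hj)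

lemma msum_apply_le_one {a : σ → τ} (ha : Function.Injective a) (T : Finset σ) (x : τ) :
    msum a T x ≤ 1 := by
  classical
  rw [msum_apply, Finset.sum_boole, Nat.cast_id]
  refine Finset.card_le_one.2 ?_
  intro i hi j hj
  rw [Finset.mem_filter] at hi hj
  exact ha (hi.2.trans hj.2.symm)

lemma msum_empty (a : σ → τ) : msum a (∅ : Finset σ) = 0 := by simp [msum]

lemma msum_sum (a : σ → τ) (T : Finset σ) : (msum a T).sum (fun _ e => e) = T.card := by
  classical
  induction T using Finset.induction with
  | empty => simp [msum]
  | @insert j T h ih =>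
    rw [msum, Finset.sum_insert h, Finsupp.sum_add_index' (fun _ => rfl) (fun _ _ _ => rfl),
      ← msum, ih, Finsupp.sum_single_index rfl, Finset.card_insert_of_notMem h]
    omega

lemma mem_of_msum_eq {a : σ → τ} (ha : Function.Injective a) {T T' : Finset σ}
    (h : msum a T = msum a T') {j : σ} (hj : j ∈ T) : j ∈ T' := by
  by_contra hj'
  have h1 : 1 ≤ msum a T (a j) := msum_apply_pos hj
  have h0 : msum a T' (a j) = 0 :=
    msum_apply_eq_zero fun j' hj'' hee => hj' (ha hee ▸ hj'')
  rw [h, h0] at h1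
  omega

lemma msum_inj {a : σ → τ} (ha : Function.Injective a) {T T' : Finset σ}
    (h : msum a T = msum a T') : T = T' := by
  ext j
  exact ⟨fun hj => mem_of_msum_eq ha h hj, fun hj => mem_of_msum_eq ha h.symm hj⟩

lemma prod_X {R : Type*} [CommSemiring R] (a : σ → τ) (T : Finset σ) :
    (∏ j ∈ T, (X (a j) : MvPolynomial τ R)) = monomial (msum a T) 1 := by
  classical
  induction T using Finset.induction with
  | empty => simp [msum]
  | @insert j T h ih =>
    rw [Finset.prod_insert h, ih,
      show msum a (insert j T) = Finsupp.single (a j) 1 + msum a T from by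
        rw [msum, msum, Finset.sum_insert h],
      show (X (a j) : MvPolynomial τ R) = monomial (Finsupp.single (a j) 1) 1 from rfl,
      monomial_mul, one_mul]

lemma eq_of_support_eq (s s' : σ →₀ ℕ) (hs : ∀ i, s i ≤ 1) (hs' : ∀ i, s' i ≤ 1)
    (h : s.support = s'.support) : s = s' := by
  ext i
  by_cases hi : i ∈ s.support
  · have hi' : i ∈ s'.support := h ▸ hi
    have h1 := Finsupp.mem_support_iff.1 hi
    have h2 := Finsupp.mem_support_iff.1 hi'
    have := hs i; have := hs' i; omega
  · have hi' : i ∉ s'.support := h ▸ hi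
    rw [Finsupp.notMem_support_iff.1 hi, Finsupp.notMem_support_iff.1 hi']

lemma bind1_expand (q : MvPolynomial σ (ZMod 2)) (hq : ∀ s ∈ q.support, ∀ i, s i ≤ 1)
    (b c : σ → τ) :
    bind₁ (fun j => (X (b j) + X (c j) : MvPolynomial τ (ZMod 2))) q =
      ∑ s ∈ q.support, ∑ T ∈ s.support.powerset,
        monomial (msum b T + msum c (s.support \ T)) (1 : ZMod 2) := by
  classical
  conv_lhs => rw [← q.support_sum_monomial_coeff, map_sum]
  refine Finset.sum_congr rfl fun s hs => ?_
  have hc : coeff s q = 1 := by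
    have h0 : coeff s q ≠ 0 := mem_support_iff.1 hs
    revert h0
    generalize coeff s q = z
    revert z; decide
  rw [bind₁_monomial, hc, map_one, one_mul]
  have hpow : ∀ j ∈ s.support,
      ((fun j => (X (b j) + X (c j) : MvPolynomial τ (ZMod 2))) j) ^ s j
        = X (b j) + X (c j) := by
    intro j hj
    have h1 : s j = 1 :=
      le_antisymm (hq s hs j) (Nat.one_le_iff_ne_zero.2 (Finsupp.mem_support_iff.1 hj))
    rw [h1, pow_one]
  rw [Finset.prod_congr rfl hpow, Finset.prod_add]
  refine Finset.sum_congr rfl fun T hT => ?_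
  rw [prod_X, prod_X, monomial_mul, one_mul]

end S2Aux

open MvPolynomial S2Aux in
/-- with `n = 2m`, `m ≥ 1`, and `γ` a Boolean function on `𝔽₂^m` of algebraic
degree `d ≥ 2`, the function
`f(x₀,…,x_{n-1}) = Σ_{i=0}^{m-1} xᵢ·x_{i+m} + γ(x₀+x_m, …, x_{m-1}+x_{2m-1})`
has algebraic degree `d`. -/
theorem statement2 (m : ℕ) (hm : 1 ≤ m) [NeZero m]
    (d : ℕ) (hd : 2 ≤ d)
    (γ : (ZMod m → ZMod 2) → ZMod 2) (hγ : HasAlgebraicDegree γ d)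
    (f : (ZMod (2 * m) → ZMod 2) → ZMod 2)
    (hf : ∀ x : ZMod (2 * m) → ZMod 2,
      f x = ∑ i ∈ Finset.range m, x i * x (i + m) +
        γ (fun j : ZMod m => x j.val + x (j.val + m : ZMod (2 * m)))) :
    HasAlgebraicDegree f d := by
  classical
  obtain ⟨q, hq1, hq2, hq3⟩ := hγ
  haveI : NeZero (2 * m) := ⟨by omega⟩
  -- the two variable embeddings
  set ι : ZMod m → ZMod (2 * m) := fun j => (j.val : ZMod (2 * m)) with hιdef
  set κ : ZMod m → ZMod (2 * m) :=
    fun j => (j.val : ZMod (2 * m)) + (m : ZMod (2 * m)) with hκdef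
  have hιv : ∀ j, (ι j).val = j.val := by
    intro j
    exact ZMod.val_cast_of_lt (by have := ZMod.val_lt j; omega)
  have hκv : ∀ j, (κ j).val = j.val + m := by
    intro j
    have h1 : κ j = ((j.val + m : ℕ) : ZMod (2 * m)) := by
      rw [hκdef]; push_cast; ring
    rw [h1]
    exact ZMod.val_cast_of_lt (by have := ZMod.val_lt j; omega)
  have hιinj : Function.Injective ι := by
    intro j j' h
    have := congrArg ZMod.val h
    rw [hιv, hιv] at this
    exact ZMod.val_injective m this
  have hκinj : Function.Injective κ := by
    intro j j' h
    have := congrArg ZMod.val h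
    rw [hκv, hκv] at this
    exact ZMod.val_injective m (by omega)
  have hικ : ∀ j j', ι j ≠ κ j' := by
    intro j j' h
    have h1 := congrArg ZMod.val h
    rw [hιv, hκv] at h1
    have := ZMod.val_lt j
    omega
  -- the quadratic part
  set P₂ : MvPolynomial (ZMod (2 * m)) (ZMod 2) :=
    ∑ i ∈ Finset.range m, X ((i : ZMod (2 * m))) * X ((i : ZMod (2 * m)) + (m : ZMod (2 * m)))
    with hP₂def
  set u : ℕ → (ZMod (2 * m) →₀ ℕ) := fun i =>
    Finsupp.single ((i : ZMod (2 * m))) 1 +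
      Finsupp.single ((i : ZMod (2 * m)) + (m : ZMod (2 * m))) 1 with hudef
  have hP₂' : P₂ = ∑ i ∈ Finset.range m, monomial (u i) (1 : ZMod 2) := by
    refine Finset.sum_congr rfl fun i _ => ?_
    rw [show (X ((i : ZMod (2 * m))) : MvPolynomial (ZMod (2 * m)) (ZMod 2))
        = monomial (Finsupp.single ((i : ZMod (2 * m))) 1) 1 from rfl,
      show (X ((i : ZMod (2 * m)) + (m : ZMod (2 * m))) : MvPolynomial (ZMod (2 * m)) (ZMod 2))
        = monomial (Finsupp.single ((i : ZMod (2 * m)) + (m : ZMod (2 * m))) 1) 1 from rfl,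
      monomial_mul, one_mul]
  -- val computations for the quadratic part
  have hiv : ∀ i < m, ((i : ZMod (2 * m))).val = i := fun i hi =>
    ZMod.val_cast_of_lt (by omega)
  have hbv : ∀ i < m, (((i : ZMod (2 * m)) + (m : ZMod (2 * m)))).val = i + m := by
    intro i hi
    rw [show ((i : ZMod (2 * m)) + (m : ZMod (2 * m))) = ((i + m : ℕ) : ZMod (2 * m)) by
      push_cast; ring]
    exact ZMod.val_cast_of_lt (by omega)
  have hab : ∀ i < m, ((i : ZMod (2 * m))) ≠ ((i : ZMod (2 * m)) + (m : ZMod (2 * m))) := by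
    intro i hi h
    have := congrArg ZMod.val h
    rw [hiv i hi, hbv i hi] at this
    omega
  -- the expansion of the substituted part
  have hexp : bind₁ (fun j => (X (ι j) + X (κ j) : MvPolynomial (ZMod (2 * m)) (ZMod 2))) q =
      ∑ s ∈ q.support, ∑ T ∈ s.support.powerset,
        monomial (msum ι T + msum κ (s.support \ T)) (1 : ZMod 2) :=
    bind1_expand q hq1 ι κ
  set B : MvPolynomial (ZMod (2 * m)) (ZMod 2) :=
    bind₁ (fun j => (X (ι j) + X (κ j) : MvPolynomial (ZMod (2 * m)) (ZMod 2))) q with hBdef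
  -- pick a top-degree monomial of q
  have hq0 : q ≠ 0 := by
    intro h
    rw [h, totalDegree_zero] at hq3
    omega
  obtain ⟨s₀, hs₀, hs₀d⟩ : ∃ s₀ ∈ q.support, (s₀.sum fun _ e => e) = d := by
    obtain ⟨s₀, hs₀, h⟩ := Finset.exists_mem_eq_sup q.support
      (Finset.nonempty_iff_ne_empty.2 (mt MvPolynomial.support_eq_empty.1 hq0)) (fun s => s.sum fun _ e => e)
    exact ⟨s₀, hs₀, by rw [← h]; exact hq3⟩
  set S₀ : Finset (ZMod m) := s₀.support with hS₀def
  set t₀ : ZMod (2 * m) →₀ ℕ := msum ι S₀ with ht₀def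
  have hS₀card : S₀.card = d := by
    rw [← hs₀d, Finsupp.sum, Finset.card_eq_sum_ones]
    refine Finset.sum_congr rfl fun j hj => ?_
    exact le_antisymm (Nat.one_le_iff_ne_zero.2 (Finsupp.mem_support_iff.1 hj)) (hq1 s₀ hs₀ j)
  have ht₀hi : ∀ x : ZMod (2 * m), m ≤ x.val → t₀ x = 0 := by
    intro x hx
    refine msum_apply_eq_zero fun j _ h => ?_
    have := congrArg ZMod.val h
    rw [hιv] at this
    have := ZMod.val_lt j
    omega
  -- key uniqueness claim
  have key : ∀ s ∈ q.support, ∀ T ⊆ s.support,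
      msum ι T + msum κ (s.support \ T) = t₀ → s = s₀ ∧ T = S₀ := by
    intro s hs T hT hEq
    have hdiff : s.support \ T = ∅ := by
      by_contra hne
      obtain ⟨j, hj⟩ := Finset.nonempty_iff_ne_empty.2 hne
      have h1 : 1 ≤ msum κ (s.support \ T) (κ j) := msum_apply_pos hj
      have h2 : (msum ι T + msum κ (s.support \ T)) (κ j) = 0 := by
        rw [hEq]
        exact ht₀hi _ (by rw [hκv]; omega)
      rw [Finsupp.add_apply] at h2
      omega
    have hTeq : T = s.support := Finset.Subset.antisymm hT
      (Finset.sdiff_eq_empty_iff_subset.1 hdiff)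
    rw [hdiff, msum_empty, add_zero] at hEq
    have hTS₀ : T = S₀ := msum_inj hιinj hEq
    have hsupp : s.support = s₀.support := by rw [← hTeq, hTS₀, hS₀def]
    exact ⟨eq_of_support_eq s s₀ (hq1 s hs) (hq1 s₀ hs₀) hsupp, hTS₀⟩
  have hback : msum ι S₀ + msum κ (s₀.support \ S₀) = t₀ := by
    rw [hS₀def, Finset.sdiff_self, msum_empty, add_zero, ht₀def, hS₀def]
  -- coefficient of t₀ in B is 1
  have hcoB : coeff t₀ B = 1 := by
    rw [hexp, coeff_sum]
    have inner : ∀ s ∈ q.support,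
        (∑ T ∈ s.support.powerset,
          coeff t₀ (monomial (msum ι T + msum κ (s.support \ T)) (1 : ZMod 2)))
          = if s = s₀ then 1 else 0 := by
      intro s hs
      by_cases hss : s = s₀
      · subst hss
        rw [if_pos rfl]
        have hterm : ∀ T ∈ s.support.powerset,
            coeff t₀ (monomial (msum ι T + msum κ (s.support \ T)) (1 : ZMod 2))
              = if T = S₀ then 1 else 0 := by
          intro T hT
          rw [coeff_monomial]
          by_cases h : T = S₀
          · subst h
            rw [if_pos rfl, if_pos hback]
          · rw [if_neg h, if_neg]
            intro hEq
            exact h (key s hs T (Finset.mem_powerset.1 hT) hEq).2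
        rw [Finset.sum_congr rfl hterm, Finset.sum_ite_eq' s.support.powerset S₀
          (fun _ => (1 : ZMod 2))]
        rw [if_pos]
        rw [Finset.mem_powerset, hS₀def]
      · rw [if_neg hss]
        refine Finset.sum_eq_zero fun T hT => ?_
        rw [coeff_monomial, if_neg]
        intro hEq
        exact hss (key s hs T (Finset.mem_powerset.1 hT) hEq).1
    rw [Finset.sum_congr rfl (fun s hs => by rw [coeff_sum, inner s hs]),
      Finset.sum_ite_eq' q.support s₀ (fun _ => (1 : ZMod 2)), if_pos hs₀]
  -- coefficient of t₀ in P₂ is 0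
  have hcoP₂ : coeff t₀ P₂ = 0 := by
    rw [hP₂', coeff_sum]
    refine Finset.sum_eq_zero fun i hi => ?_
    have him : i < m := Finset.mem_range.1 hi
    rw [coeff_monomial, if_neg]
    intro h
    have hu1 : 1 ≤ u i ((i : ZMod (2 * m)) + (m : ZMod (2 * m))) := by
      rw [hudef]
      simp only [Finsupp.add_apply, Finsupp.single_eq_same]
      omega
    have h2 : t₀ ((i : ZMod (2 * m)) + (m : ZMod (2 * m))) = 0 :=
      ht₀hi _ (by rw [hbv i him]; omega)
    rw [h, h2] at hu1
    omega
  refine ⟨P₂ + B, ?_, ?_, ?_⟩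
  · -- multilinearity
    intro s hs x
    rcases Finset.mem_union.1 (MvPolynomial.support_add hs) with h | h
    · rw [hP₂'] at h
      obtain ⟨i, hi, hmem⟩ := Finset.mem_biUnion.1 (MvPolynomial.support_sum h)
      have him : i < m := Finset.mem_range.1 hi
      rw [support_monomial, if_neg one_ne_zero, Finset.mem_singleton] at hmem
      subst hmem
      simp only [hudef, Finsupp.add_apply, Finsupp.single_apply]
      split_ifs with h1 h2
      · exact absurd (h1.trans h2.symm) (hab i him)
      · omega
      · omega
      · omega
    · rw [hexp] at h
      obtain ⟨s', hs', hmem⟩ := Finset.mem_biUnion.1 (MvPolynomial.support_sum h)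
      obtain ⟨T, hT, hmem2⟩ := Finset.mem_biUnion.1 (MvPolynomial.support_sum hmem)
      rw [support_monomial, if_neg one_ne_zero, Finset.mem_singleton] at hmem2
      subst hmem2
      rw [Finsupp.add_apply]
      by_cases hx : x.val < m
      · have h0 : msum κ (s'.support \ T) x = 0 := by
          refine msum_apply_eq_zero fun j _ hjx => ?_
          have := congrArg ZMod.val hjx
          rw [hκv] at this
          omega
        have := msum_apply_le_one hιinj T x
        omega
      · have h0 : msum ι T x = 0 := by
          refine msum_apply_eq_zero fun j _ hjx => ?_
          have := congrArg ZMod.val hjx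
          rw [hιv] at this
          have := ZMod.val_lt j
          omega
        have := msum_apply_le_one hκinj (s'.support \ T) x
        omega
  · -- evaluation
    intro x
    rw [hf, map_add]
    congr 1
    · rw [hP₂def, map_sum]
      refine Finset.sum_congr rfl fun i _ => ?_
      rw [map_mul, eval_X, eval_X]
    · rw [hBdef,
        show (eval x : MvPolynomial (ZMod (2 * m)) (ZMod 2) →+* ZMod 2)
          = eval₂Hom (RingHom.id (ZMod 2)) x from rfl,
        eval₂Hom_bind₁]
      rw [show (eval₂Hom (RingHom.id (ZMod 2))
          (fun i => eval₂Hom (RingHom.id (ZMod 2)) x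
            ((fun j => (X (ι j) + X (κ j) : MvPolynomial (ZMod (2 * m)) (ZMod 2))) i)) q)
        = eval (fun i => eval x (X (ι i) + X (κ i))) q from rfl]
      rw [show (fun i => eval x (X (ι i) + X (κ i))) = fun j : ZMod m =>
          x j.val + x ((j.val : ZMod (2 * m)) + (m : ZMod (2 * m))) by
        funext j
        rw [map_add, eval_X, eval_X, hιdef, hκdef]]
      exact hq2 _
  · -- total degree
    refine le_antisymm ?_ ?_
    · rw [MvPolynomial.totalDegree]
      refine Finset.sup_le fun s hs => ?_
      rcases Finset.mem_union.1 (MvPolynomial.support_add hs) with h | h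
      · rw [hP₂'] at h
        obtain ⟨i, hi, hmem⟩ := Finset.mem_biUnion.1 (MvPolynomial.support_sum h)
        rw [support_monomial, if_neg one_ne_zero, Finset.mem_singleton] at hmem
        subst hmem
        rw [hudef]
        rw [Finsupp.sum_add_index' (fun _ => rfl) (fun _ _ _ => rfl),
          Finsupp.sum_single_index rfl, Finsupp.sum_single_index rfl]
        omega
      · rw [hexp] at h
        obtain ⟨s', hs', hmem⟩ := Finset.mem_biUnion.1 (MvPolynomial.support_sum h)
        obtain ⟨T, hT, hmem2⟩ := Finset.mem_biUnion.1 (MvPolynomial.support_sum hmem)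
        rw [support_monomial, if_neg one_ne_zero, Finset.mem_singleton] at hmem2
        subst hmem2
        rw [Finsupp.sum_add_index' (fun _ => rfl) (fun _ _ _ => rfl), msum_sum, msum_sum]
        have hTsub : T ⊆ s'.support := Finset.mem_powerset.1 hT
        have hc := Finset.card_sdiff_add_card_eq_card hTsub
        have hcard_le : s'.support.card ≤ s'.sum fun _ e => e := by
          rw [Finsupp.sum, Finset.card_eq_sum_ones]
          refine Finset.sum_le_sum fun j hj => ?_
          exact Nat.one_le_iff_ne_zero.2 (Finsupp.mem_support_iff.1 hj)
        have hd' := MvPolynomial.le_totalDegree hs'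
        rw [hq3] at hd'
        omega
    · have hmem : t₀ ∈ (P₂ + B).support := by
        rw [MvPolynomial.mem_support_iff, coeff_add, hcoP₂, hcoB, zero_add]
        exact one_ne_zero
      have := MvPolynomial.le_totalDegree hmem
      rw [ht₀def, msum_sum, hS₀card] at this
      exact this
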